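/- Let M_1, …, M_n be DFAs over a common alphabet Σ, with each accepting set F_i nonempty and every state of M_i reachable from its initial state s_i, and let G be the labeled graph obtained from the first reduction construction applied to M_1, …, M_n. Then ⋃_{i=1}^n L(M_i) = Σ* if and only if the shift space ⟨G⟩ is irreducible. -/

import Mathlib

/-- A labeled graph over vertex type `V` and alphabet `A`, given by its
labeled-edge relation: `Edge p a q` means there is an edge labeled `a`
from `p` to `q`. -/
structure LabeledGraph (V A : Type) where
  Edge : V → A → V → Prop

namespace LabeledGraph

variable {V A : Type}

/-- `G.Walk p w q` : there is a (finite) path from `p` to `q` labeled `w`. -/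
def Walk (G : LabeledGraph V A) : V → List A → V → Prop
  | p, [], q => p = q
  | p, a :: w, q => ∃ r, G.Edge p a r ∧ Walk G r w q

/-- The follower set of a vertex: labels of finite paths starting at `q`. -/
def follower (G : LabeledGraph V A) (q : V) : Set (List A) :=
  { w | ∃ q', G.Walk q w q' }

/-- The transition action on sets of vertices: `S·w`. -/
def transSet (G : LabeledGraph V A) (S : Set V) (w : List A) : Set V :=
  { q' | ∃ q ∈ S, G.Walk q w q' }

/-- `G` is deterministic (right-resolving). -/
def Deterministic (G : LabeledGraph V A) : Prop :=
  ∀ p a q q', G.Edge p a q → G.Edge p a q' → q = q'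

/-- `G` is essential: every vertex has an outgoing and an incoming edge. -/
def Essential (G : LabeledGraph V A) : Prop :=
  ∀ q, (∃ a r, G.Edge q a r) ∧ (∃ a p, G.Edge p a q)

/-- The sofic shift presented by `G`: labels of bi-infinite paths. -/
def shift (G : LabeledGraph V A) : Set (ℤ → A) :=
  { x | ∃ v : ℤ → V, ∀ j : ℤ, G.Edge (v j) (x j) (v (j + 1)) }

/-- `w` is a synchronizing word for `G`: `Q_G · w` is a singleton. -/
def SyncWord (G : LabeledGraph V A) (w : List A) : Prop :=
  ∃ r, G.transSet Set.univ w = {r}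

/-- A vertex `q` is synchronizing: some word synchronizes to `q`. -/
def SyncVertex (G : LabeledGraph V A) (q : V) : Prop :=
  ∃ w, G.transSet Set.univ w = {q}

/-- `G` is synchronizing: every vertex is synchronizing. -/
def Synchronizing (G : LabeledGraph V A) : Prop :=
  ∀ q, G.SyncVertex q

/-- `G` is follower-separated. -/
def FollowerSeparated (G : LabeledGraph V A) : Prop :=
  ∀ p q, G.follower p = G.follower q → p = q

/-- `G` is irreducible (strongly connected). -/
def StronglyConnected (G : LabeledGraph V A) : Prop :=
  ∀ p q, ∃ w, G.Walk p w q

/-- `q` is reachable from `p`. -/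
def Reachable (G : LabeledGraph V A) (p q : V) : Prop :=
  ∃ w, G.Walk p w q

/-- `C` is an irreducible component: an equivalence class of mutual reachability. -/
def IsIrredComponent (G : LabeledGraph V A) (C : Set V) : Prop :=
  ∃ p, C = { q | G.Reachable p q ∧ G.Reachable q p }

/-- `C` is terminal: everything reachable from `C` lies in `C`. -/
def TerminalSet (G : LabeledGraph V A) (C : Set V) : Prop :=
  ∀ p ∈ C, ∀ q, G.Reachable p q → q ∈ C

/-- `C` is initial: everything that reaches `C` lies in `C`. -/
def InitialSet (G : LabeledGraph V A) (C : Set V) : Prop :=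
  ∀ q ∈ C, ∀ p, G.Reachable p q → p ∈ C

/-- Subgraph induced by a set `P` of vertices. -/
def induce (G : LabeledGraph V A) (P : Set V) : LabeledGraph P A where
  Edge := fun p a q => G.Edge p.1 a q.1

/-- The graph `Ĝ`: vertices are ordered pairs of distinct vertices of `G`,
with an edge labeled `a` from `(p₁,p₂)` to `(q₁,q₂)` iff `G` has edges labeled
`a` from `p₁` to `q₁` and from `p₂` to `q₂`. -/
def pairGraph (G : LabeledGraph V A) : LabeledGraph { pq : V × V // pq.1 ≠ pq.2 } A where
  Edge := fun x a y => G.Edge x.1.1 a y.1.1 ∧ G.Edge x.1.2 a y.1.2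

end LabeledGraph

/-- The word `w` appears in the bi-infinite sequence `x`. -/
def AppearsIn {A : Type} (w : List A) (x : ℤ → A) : Prop :=
  ∃ i : ℤ, ∀ n : Fin w.length, x (i + (n : ℕ)) = w.get n

/-- The language of a subset of the full shift: all finite words appearing
in some point of `X`. -/
def lang {A : Type} (X : Set (ℤ → A)) : Set (List A) :=
  { w | ∃ x ∈ X, AppearsIn w x }

/-- `X` is a shift space. -/
def IsShiftSpace {A : Type} (X : Set (ℤ → A)) : Prop :=
  ∃ F : Set (List A), X = { x | ∀ w ∈ F, ¬ AppearsIn w x }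

/-- `X` is a shift of finite type. -/
def IsSFT {A : Type} (X : Set (ℤ → A)) : Prop :=
  ∃ F : Set (List A), F.Finite ∧ X = { x | ∀ w ∈ F, ¬ AppearsIn w x }

/-- `w` is intrinsically synchronizing for `X`. -/
def IntrinsicallySync {A : Type} (X : Set (ℤ → A)) (w : List A) : Prop :=
  w ∈ lang X ∧ ∀ u v, u ++ w ∈ lang X → w ++ v ∈ lang X → u ++ (w ++ v) ∈ lang X

/-- `X` is an irreducible shift space. -/
def IrreducibleShift {A : Type} (X : Set (ℤ → A)) : Prop :=
  ∀ u ∈ lang X, ∀ v ∈ lang X, ∃ w, u ++ (w ++ v) ∈ lang X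

/-- The follower set of a word `u` in `X`. -/
def followerX {A : Type} (X : Set (ℤ → A)) (u : List A) : Set (List A) :=
  { w | u ++ w ∈ lang X }

/-- `X` is `M`-step: every word of `B(X)` of length at least `M` is
intrinsically synchronizing for `X`. -/
def MStep {A : Type} (X : Set (ℤ → A)) (M : ℕ) : Prop :=
  ∀ w ∈ lang X, M ≤ w.length → IntrinsicallySync X w

/-- A deterministic finite automaton over state type `Q` and alphabet `A`. -/
structure DFA' (Q A : Type) where
  step : Q → A → Q
  start : Q
  accept : Set Q

/-- Extended transition function. -/
def DFA'.evalFrom {Q A : Type} (M : DFA' Q A) (q : Q) (w : List A) : Q :=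
  w.foldl M.step q

/-- The language of a DFA. -/
def DFA'.lang {Q A : Type} (M : DFA' Q A) : Set (List A) :=
  { w | M.evalFrom M.start w ∈ M.accept }

/-- Alphabet `Σ ∪ {◁, ▷, *, ℓ}`. -/
inductive Sym1 (A : Type) : Type
  | letter : A → Sym1 A
  | lm : Sym1 A    -- ◁
  | rm : Sym1 A    -- ▷
  | star : Sym1 A  -- *
  | ell : Sym1 A   -- ℓ

/-- Vertices of the first reduction construction: the pre-initial states `p_i`,
the DFA states, and the two special states `p*` and `s*`. -/
inductive V1 {n : ℕ} (Q : Fin n → Type) : Type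
  | pre : Fin n → V1 Q
  | st : (i : Fin n) → Q i → V1 Q
  | pstar : V1 Q
  | sstar : V1 Q

/-- Edges of the first reduction construction. -/
inductive Red1Edge {n : ℕ} {Q : Fin n → Type} {A : Type} (M : ∀ i, DFA' (Q i) A) :
    V1 Q → Sym1 A → V1 Q → Prop
  /-- self loop labeled `*` on `p_i` -/
  | preLoop (i : Fin n) : Red1Edge M (.pre i) .star (.pre i)
  /-- the embedded DFA transitions -/
  | dfaStep (i : Fin n) (q : Q i) (a : A) :
      Red1Edge M (.st i q) (.letter a) (.st i ((M i).step q a))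
  /-- edge labeled `◁` from `p_i` to `s_i` -/
  | enter (i : Fin n) : Red1Edge M (.pre i) .lm (.st i ((M i).start))
  /-- edge labeled `▷` from each accepting state to `p_1` -/
  | exitAcc (i : Fin n) (q : Q i) (j : Fin n) :
      q ∈ (M i).accept → (j : ℕ) = 0 → Red1Edge M (.st i q) .rm (.pre j)
  /-- edge labeled `ℓ` from each state of `M_i` to `s_i` -/
  | reset (i : Fin n) (q : Q i) : Red1Edge M (.st i q) .ell (.st i ((M i).start))
  /-- self loop labeled `*` on `p*` -/
  | pstarLoop : Red1Edge M .pstar .star .pstar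
  /-- edge labeled `◁` from `p*` to `s*` -/
  | pstarEnter : Red1Edge M .pstar .lm .sstar
  /-- edge labeled `▷` from `s*` to `p_1` -/
  | sstarExit (j : Fin n) : (j : ℕ) = 0 → Red1Edge M .sstar .rm (.pre j)
  /-- self loop labeled `a` on `s*` for each `a ∈ Σ` -/
  | sstarLoop (a : A) : Red1Edge M .sstar (.letter a) .sstar
  /-- edge labeled `ℓ` from `p_i` to `p_{i+1}` for `i = 1, …, n-1` -/
  | chain (i j : Fin n) : (j : ℕ) = (i : ℕ) + 1 → Red1Edge M (.pre i) .ell (.pre j)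
  /-- edge labeled `ℓ` from `p_n` to `s*` -/
  | lastChain (i : Fin n) : (i : ℕ) + 1 = n → Red1Edge M (.pre i) .ell .sstar

/-- The labeled graph `G` of the first reduction construction. -/
def Red1 {n : ℕ} {Q : Fin n → Type} {A : Type} (M : ∀ i, DFA' (Q i) A) :
    LabeledGraph (V1 Q) (Sym1 A) where
  Edge := Red1Edge M


section AuxGeneric

variable {V A : Type} {G : LabeledGraph V A}

lemma walk_nil' {p q : V} (h : p = q) : G.Walk p [] q := h

lemma walk_cons' {p r q : V} {a : A} {w : List A} (he : G.Edge p a r)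
    (hw : G.Walk r w q) : G.Walk p (a :: w) q := ⟨r, he, hw⟩

lemma walk_single {p q : V} {a : A} (he : G.Edge p a q) : G.Walk p [a] q :=
  ⟨q, he, rfl⟩

lemma walk_append : ∀ {u : List A} {p q : V} {v : List A} {r : V},
    G.Walk p u q → G.Walk q v r → G.Walk p (u ++ v) r
  | [], p, q, v, r, h1, h2 => by cases h1; exact h2
  | a :: u, p, q, v, r, ⟨s, he, hw⟩, h2 => ⟨s, he, walk_append hw h2⟩

lemma walk_append_inv : ∀ {u : List A} {p : V} {v : List A} {r : V},
    G.Walk p (u ++ v) r → ∃ q, G.Walk p u q ∧ G.Walk q v r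
  | [], p, v, r, h => ⟨p, rfl, h⟩
  | a :: u, p, v, r, ⟨s, he, hw⟩ => by
      obtain ⟨q, h1, h2⟩ := walk_append_inv hw
      exact ⟨q, ⟨s, he, h1⟩, h2⟩

lemma exists_vertex_fun : ∀ {w : List A} {p q : V}, G.Walk p w q →
    ∃ f : ℕ → V, f 0 = p ∧ f w.length = q ∧
      ∀ j (h : j < w.length), G.Edge (f j) (w.get ⟨j, h⟩) (f (j + 1))
  | [], p, q, h => by cases h; exact ⟨fun _ => p, rfl, rfl, fun j h => absurd h (by simp)⟩
  | a :: w, p, q, ⟨s, he, hw⟩ => by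
      obtain ⟨f, hf0, hfl, hfe⟩ := exists_vertex_fun hw
      refine ⟨fun t => Nat.rec p (fun t _ => f t) t, rfl, hfl, ?_⟩
      intro j h
      cases j with
      | zero => simpa [hf0] using he
      | succ j => exact hfe j (by simpa using h)

lemma mem_lang_of_loops {p q : V} {a b : A} {w : List A}
    (ha : G.Edge p a p) (hw : G.Walk p w q) (hb : G.Edge q b q) :
    ∃ x ∈ G.shift, AppearsIn w x := by
  obtain ⟨f, hf0, hfl, hfe⟩ := exists_vertex_fun hw
  set l := w.length with hl
  refine ⟨fun j => if j < 0 then a else if h : j.toNat < l then w.get ⟨j.toNat, h⟩ else b,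
    ⟨fun j => if j ≤ 0 then p else if j.toNat ≤ l then f j.toNat else q, ?_⟩, 0, ?_⟩
  · intro j
    rcases lt_or_ge j 0 with hj | hj
    · have h1 : j ≤ 0 := le_of_lt hj
      have h2 : j + 1 ≤ 0 := by omega
      simp only [if_pos hj, if_pos h1, if_pos h2]
      exact ha
    · have hx : ¬ j < 0 := not_lt.mpr hj
      by_cases ht : j.toNat < l
      · have hvj : (if j ≤ 0 then p else if j.toNat ≤ l then f j.toNat else q) = f j.toNat := by
          rcases eq_or_lt_of_le hj with h0 | h0
          · simp [← h0, hf0]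
          · have : ¬ j ≤ 0 := by omega
            simp [this, le_of_lt ht]
        have hj1 : ¬ j + 1 ≤ 0 := by omega
        have hj1t : (j + 1).toNat = j.toNat + 1 := by omega
        have hj1l : (j + 1).toNat ≤ l := by omega
        simp only [if_neg hx, dif_pos ht, hvj, if_neg hj1, hj1t,
          if_pos (show j.toNat + 1 ≤ l by omega)]
        exact hfe j.toNat ht
      · have hvj : (if j ≤ 0 then p else if j.toNat ≤ l then f j.toNat else q) = q := by
          rcases eq_or_lt_of_le hj with h0 | h0
          · have hl0 : l = 0 := by omega
            have : p = q := by rw [← hf0, ← hfl, hl0]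
            simp [← h0, this]
          · have h1 : ¬ j ≤ 0 := by omega
            by_cases h2 : j.toNat ≤ l
            · have : j.toNat = l := by omega
              simp [h1, h2, this, hfl]
            · simp [h1, h2]
        have hj1 : ¬ j + 1 ≤ 0 := by omega
        have hj1t : ¬ (j + 1).toNat ≤ l := by omega
        simp only [if_neg hx, dif_neg ht, hvj, if_neg hj1, if_neg hj1t]
        exact hb
  · intro m
    have h0 : ¬ ((0 : ℤ) + (m : ℕ) < 0) := by omega
    have h1 : ((0 : ℤ) + (m : ℕ)).toNat = (m : ℕ) := by omega
    have h2 : ((0 : ℤ) + (m : ℕ)).toNat < l := by rw [h1]; exact m.2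
    simp only [if_neg h0, dif_pos h2]
    refine congrArg w.get (Fin.ext ?_)
    show ((0 : ℤ) + (m : ℕ)).toNat = (m : ℕ)
    omega

lemma walk_of_appears {x : ℤ → A} (hx : x ∈ G.shift) {w : List A}
    (hw : AppearsIn w x) : ∃ p q : V, G.Walk p w q := by
  obtain ⟨vf, hvf⟩ := hx
  obtain ⟨i, hi⟩ := hw
  suffices h : ∀ (w : List A) (i : ℤ), (∀ m : Fin w.length, x (i + (m : ℕ)) = w.get m) →
      G.Walk (vf i) w (vf (i + w.length)) by
    exact ⟨vf i, vf (i + w.length), h w i hi⟩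
  clear hi i
  intro w
  induction w with
  | nil => intro i _; show G.Walk (vf i) [] (vf (i + ((0 : ℕ) : ℤ))); simp [LabeledGraph.Walk]
  | cons a w ih =>
    intro i hi
    refine ⟨vf (i + 1), ?_, ?_⟩
    · have h0 : x i = a := by simpa using hi ⟨0, by simp⟩
      rw [← h0]; exact hvf i
    · have := ih (i + 1) (fun m => by
        have h1 := hi ⟨(m : ℕ) + 1, by simp⟩
        have h2 : i + (((m : ℕ) + 1 : ℕ) : ℤ) = i + 1 + (m : ℕ) := by push_cast; ring
        rw [h2] at h1
        simpa using h1)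
      have h3 : i + 1 + ((w.length : ℕ) : ℤ) = i + (((a :: w).length : ℕ) : ℤ) := by
        push_cast [List.length_cons]; ring
      rwa [h3] at this

lemma appears_of_append {z₁ w z₂ : List A} {x : ℤ → A}
    (h : AppearsIn (z₁ ++ (w ++ z₂)) x) : AppearsIn w x := by
  obtain ⟨i, hi⟩ := h
  refine ⟨i + z₁.length, fun m => ?_⟩
  have hlen : z₁.length + (m : ℕ) < (z₁ ++ (w ++ z₂)).length := by
    simp; have := m.2; omega
  have hval := hi ⟨z₁.length + (m : ℕ), hlen⟩
  have hidx : i + (z₁.length : ℤ) + (m : ℕ) =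
      i + (((⟨z₁.length + (m : ℕ), hlen⟩ : Fin _) : ℕ) : ℤ) := by
    push_cast; ring
  rw [hidx, hval]
  show (z₁ ++ (w ++ z₂))[z₁.length + (m : ℕ)]'hlen = w.get m
  rw [List.getElem_append_right (Nat.le_add_right _ _)]
  simp only [Nat.add_sub_cancel_left, List.get_eq_getElem]
  exact List.getElem_append_left m.2

end AuxGeneric


section AuxGeneric2

variable {V A : Type} {G : LabeledGraph V A}

lemma walk_cons_iff {p q : V} {a : A} {w : List A} :
    G.Walk p (a :: w) q ↔ ∃ r, G.Edge p a r ∧ G.Walk r w q := Iff.rfl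

end AuxGeneric2

section AuxRed1

variable {n : ℕ} {Q : Fin n → Type} {A : Type} {M : ∀ i, DFA' (Q i) A}

lemma walkDFA (i : Fin n) : ∀ (w : List A) (q : Q i),
    (Red1 M).Walk (.st i q) (w.map Sym1.letter) (.st i ((M i).evalFrom q w))
  | [], q => rfl
  | a :: w, q => ⟨.st i ((M i).step q a), Red1Edge.dfaStep i q a, walkDFA i w ((M i).step q a)⟩

lemma walk_replicate_star (i : Fin n) :
    ∀ m, (Red1 M).Walk (.pre i) (List.replicate m Sym1.star) (.pre i)
  | 0 => rfl
  | m + 1 => ⟨.pre i, Red1Edge.preLoop i, walk_replicate_star i m⟩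

lemma walk_sstar_letters : ∀ w : List A, (Red1 M).Walk .sstar (w.map Sym1.letter) .sstar
  | [] => rfl
  | a :: w => ⟨.sstar, Red1Edge.sstarLoop a, walk_sstar_letters w⟩

lemma reach_pre0_to_pre (hn : 0 < n) (i : Fin n) :
    ∃ z, (Red1 M).Walk (.pre ⟨0, hn⟩) z (.pre i) := by
  suffices h : ∀ k (hk : k < n), ∃ z, (Red1 M).Walk (.pre ⟨0, hn⟩) z (.pre ⟨k, hk⟩) from
    h i.1 i.2
  intro k
  induction k with
  | zero => exact fun hk => ⟨[], rfl⟩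
  | succ k ih =>
    intro hk
    obtain ⟨z, hz⟩ := ih (by omega)
    exact ⟨z ++ [.ell],
      walk_append hz (walk_single (Red1Edge.chain ⟨k, by omega⟩ ⟨k + 1, hk⟩ rfl))⟩

lemma reach_pre0_to_sstar (hn : 0 < n) :
    ∃ z, (Red1 M).Walk (.pre ⟨0, hn⟩) z .sstar := by
  have hlt : n - 1 < n := by omega
  obtain ⟨z, hz⟩ := reach_pre0_to_pre (M := M) hn ⟨n - 1, hlt⟩
  refine ⟨z ++ [.ell], walk_append hz (walk_single ?_)⟩
  exact Red1Edge.lastChain ⟨n - 1, hlt⟩ (show n - 1 + 1 = n by omega)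

lemma reach_pre0_to_st (hn : 0 < n)
    (hreach : ∀ i (q : Q i), ∃ w, (M i).evalFrom (M i).start w = q)
    (i : Fin n) (q : Q i) : ∃ z, (Red1 M).Walk (.pre ⟨0, hn⟩) z (.st i q) := by
  obtain ⟨z, hz⟩ := reach_pre0_to_pre (M := M) hn i
  obtain ⟨w, hw⟩ := hreach i q
  refine ⟨z ++ (.lm :: w.map Sym1.letter),
    walk_append hz ⟨.st i ((M i).start), Red1Edge.enter i, ?_⟩⟩
  rw [← hw]
  exact walkDFA i w _

lemma reach_from_pre0 (hn : 0 < n)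
    (hreach : ∀ i (q : Q i), ∃ w, (M i).evalFrom (M i).start w = q)
    (v : V1 Q) (hv : v ≠ .pstar) : ∃ z, (Red1 M).Walk (.pre ⟨0, hn⟩) z v := by
  cases v with
  | pre i => exact reach_pre0_to_pre hn i
  | st i q => exact reach_pre0_to_st hn hreach i q
  | pstar => exact absurd rfl hv
  | sstar => exact reach_pre0_to_sstar hn

lemma walk_st_to_pre0 (hn : 0 < n) (hacc : ∀ i, ((M i).accept).Nonempty)
    (hreach : ∀ i (q : Q i), ∃ w, (M i).evalFrom (M i).start w = q) (i : Fin n) :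
    ∃ z, (Red1 M).Walk (.st i ((M i).start)) z (.pre ⟨0, hn⟩) := by
  obtain ⟨qa, hqa⟩ := hacc i
  obtain ⟨wa, hwa⟩ := hreach i qa
  refine ⟨wa.map Sym1.letter ++ [.rm], walk_append (walkDFA i wa _) (walk_single ?_)⟩
  rw [hwa]
  exact Red1Edge.exitAcc i qa ⟨0, hn⟩ hqa rfl

lemma reach_to_pre0 (hn : 0 < n) (hacc : ∀ i, ((M i).accept).Nonempty)
    (hreach : ∀ i (q : Q i), ∃ w, (M i).evalFrom (M i).start w = q) (v : V1 Q) :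
    ∃ z, (Red1 M).Walk v z (.pre ⟨0, hn⟩) := by
  cases v with
  | pre i =>
    obtain ⟨z, hz⟩ := walk_st_to_pre0 hn hacc hreach i
    exact ⟨.lm :: z, ⟨_, Red1Edge.enter i, hz⟩⟩
  | st i q =>
    obtain ⟨z, hz⟩ := walk_st_to_pre0 hn hacc hreach i
    exact ⟨.ell :: z, ⟨_, Red1Edge.reset i q, hz⟩⟩
  | pstar =>
    exact ⟨[.lm, .rm], ⟨.sstar, Red1Edge.pstarEnter,
      ⟨_, Red1Edge.sstarExit ⟨0, hn⟩ rfl, rfl⟩⟩⟩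
  | sstar => exact ⟨[.rm], walk_single (Red1Edge.sstarExit ⟨0, hn⟩ rfl)⟩

lemma mem_lang_iff_walk (hn : 0 < n) (hacc : ∀ i, ((M i).accept).Nonempty)
    (hreach : ∀ i (q : Q i), ∃ w, (M i).evalFrom (M i).start w = q)
    (w : List (Sym1 A)) :
    w ∈ lang ((Red1 M).shift) ↔ ∃ p q, (Red1 M).Walk p w q := by
  constructor
  · rintro ⟨x, hx, hax⟩
    exact walk_of_appears hx hax
  · rintro ⟨p, q, hw⟩
    obtain ⟨z₂, hz₂⟩ := reach_to_pre0 hn hacc hreach q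
    by_cases hp : p = V1.pstar
    · subst hp
      have hfull0 : (Red1 M).Walk .pstar (w ++ z₂) (.pre ⟨0, hn⟩) :=
        walk_append hw hz₂
      have hfull : (Red1 M).Walk .pstar ([] ++ (w ++ z₂)) (.pre ⟨0, hn⟩) := hfull0
      obtain ⟨x, hx, hax⟩ := mem_lang_of_loops (G := Red1 M)
        Red1Edge.pstarLoop hfull (Red1Edge.preLoop _)
      exact ⟨x, hx, appears_of_append hax⟩
    · obtain ⟨z₁, hz₁⟩ := reach_from_pre0 hn hreach p hp
      have hfull : (Red1 M).Walk (.pre ⟨0, hn⟩) (z₁ ++ (w ++ z₂)) (.pre ⟨0, hn⟩) :=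
        walk_append hz₁ (walk_append hw hz₂)
      obtain ⟨x, hx, hax⟩ := mem_lang_of_loops (G := Red1 M)
        (Red1Edge.preLoop _) hfull (Red1Edge.preLoop _)
      exact ⟨x, hx, appears_of_append hax⟩

lemma inv_rm_target {p s : V1 Q} (he : Red1Edge M p .rm s) : ∃ j : Fin n, s = .pre j := by
  cases he with
  | exitAcc i q j hq hj => exact ⟨j, rfl⟩
  | sstarExit j hj => exact ⟨j, rfl⟩

lemma inv_rm_source {p s : V1 Q} (he : Red1Edge M p .rm s) :
    p = .sstar ∨ ∃ i q, p = .st i q ∧ q ∈ (M i).accept := by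
  cases he with
  | exitAcc i q j hq hj => exact Or.inr ⟨i, q, rfl, hq⟩
  | sstarExit j hj => exact Or.inl rfl

lemma inv_lm {p s : V1 Q} (he : Red1Edge M p .lm s) :
    (p = .pstar ∧ s = .sstar) ∨ ∃ i, p = .pre i ∧ s = .st i ((M i).start) := by
  cases he with
  | enter i => exact Or.inr ⟨i, rfl, rfl⟩
  | pstarEnter => exact Or.inl ⟨rfl, rfl⟩

lemma inv_letter {p s : V1 Q} {a : A} (he : Red1Edge M p (.letter a) s) :
    (∃ i q, p = .st i q ∧ s = .st i ((M i).step q a)) ∨ (p = .sstar ∧ s = .sstar) := by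
  cases he with
  | dfaStep i q a => exact Or.inl ⟨i, q, rfl, rfl⟩
  | sstarLoop a => exact Or.inr ⟨rfl, rfl⟩

lemma inv_to_pstar {p : V1 Q} {a : Sym1 A} (he : Red1Edge M p a .pstar) : p = .pstar := by
  cases he; rfl

lemma walk_to_pstar : ∀ {v : List (Sym1 A)} {r : V1 Q},
    (Red1 M).Walk r v .pstar → r = .pstar
  | [], _, h => h
  | a :: v, r, ⟨s, he, hw⟩ => by
    have hs := walk_to_pstar hw
    subst hs
    exact inv_to_pstar he

lemma eval_accept : ∀ (w : List A) {i : Fin n} {q : Q i} {rest : List (Sym1 A)} {r : V1 Q},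
    (Red1 M).Walk (.st i q) (w.map Sym1.letter ++ .rm :: rest) r →
    (M i).evalFrom q w ∈ (M i).accept
  | [], i, q, rest, r, ⟨s, he, _⟩ => by
    rcases inv_rm_source he with h | ⟨i', q', h, hq⟩
    · simp at h
    · injection h with h1 h2
      subst h1
      have h2' := eq_of_heq h2
      subst h2'
      exact hq
  | a :: w, i, q, rest, r, ⟨s, he, hw⟩ => by
    rcases inv_letter he with ⟨i', q', h, hs⟩ | ⟨h, _⟩
    · injection h with h1 h2
      subst h1
      have h2' := eq_of_heq h2
      subst h2'
      subst hs
      exact eval_accept w hw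
    · simp at h

lemma decomp_sstar (hn : 0 < n) : ∀ {v : List (Sym1 A)} {r : V1 Q},
    (Red1 M).Walk .sstar v r →
    (∃ w₁ : List A, v = w₁.map Sym1.letter) ∨
    (∃ (w₁ : List A) (rest : List (Sym1 A)), v = w₁.map Sym1.letter ++ .rm :: rest ∧
      (Red1 M).Walk (.pre ⟨0, hn⟩) rest r)
  | [], r, _ => Or.inl ⟨[], rfl⟩
  | a :: v, r, ⟨s, he, hw⟩ => by
    cases he with
    | sstarExit j hj =>
      have hj' : j = ⟨0, hn⟩ := Fin.ext hj
      subst hj'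
      exact Or.inr ⟨[], v, rfl, hw⟩
    | sstarLoop b =>
      rcases decomp_sstar hn hw with ⟨w₁, h1⟩ | ⟨w₁, rest, h1, h2⟩
      · exact Or.inl ⟨b :: w₁, by simp [h1]⟩
      · exact Or.inr ⟨b :: w₁, rest, by simp [h1], h2⟩

lemma decomp_pstar : ∀ {v : List (Sym1 A)} {r : V1 Q},
    (Red1 M).Walk .pstar v r →
    (∃ m, v = List.replicate m Sym1.star) ∨
    (∃ m rest, v = List.replicate m Sym1.star ++ .lm :: rest ∧ (Red1 M).Walk .sstar rest r)
  | [], r, _ => Or.inl ⟨0, rfl⟩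
  | a :: v, r, ⟨s, he, hw⟩ => by
    cases he with
    | pstarLoop =>
      rcases decomp_pstar hw with ⟨m, h1⟩ | ⟨m, rest, h1, h2⟩
      · exact Or.inl ⟨m + 1, by simp [h1, List.replicate_succ]⟩
      · exact Or.inr ⟨m + 1, rest, by simp [h1, List.replicate_succ], h2⟩
    | pstarEnter => exact Or.inr ⟨0, v, rfl, hw⟩

lemma exists_walk_ne_pstar (hn : 0 < n)
    (hU : (⋃ i, (M i).lang) = Set.univ) {v : List (Sym1 A)} {p q : V1 Q}
    (hw : (Red1 M).Walk p v q) :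
    ∃ r r', (Red1 M).Walk r v r' ∧ r ≠ V1.pstar := by
  by_cases hp : p = V1.pstar
  · subst hp
    rcases decomp_pstar hw with ⟨m, h1⟩ | ⟨m, rest, h1, h2⟩
    · subst h1
      exact ⟨.pre ⟨0, hn⟩, .pre ⟨0, hn⟩, walk_replicate_star _ m,
        fun h => by cases h⟩
    · subst h1
      rcases decomp_sstar hn h2 with ⟨w₁, h3⟩ | ⟨w₁, rest', h3, h4⟩
      · subst h3
        exact ⟨.pre ⟨0, hn⟩, .st ⟨0, hn⟩ ((M ⟨0, hn⟩).evalFrom (M ⟨0, hn⟩).start w₁),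
          walk_append (walk_replicate_star _ m)
            ⟨_, Red1Edge.enter _, walkDFA _ w₁ _⟩, fun h => by cases h⟩
      · subst h3
        have hw₁ : w₁ ∈ ⋃ i, (M i).lang := hU ▸ Set.mem_univ w₁
        obtain ⟨i, hi⟩ := Set.mem_iUnion.mp hw₁
        exact ⟨.pre i, q, walk_append (walk_replicate_star i m)
          ⟨_, Red1Edge.enter i, walk_append (walkDFA i w₁ _)
            ⟨_, Red1Edge.exitAcc i _ ⟨0, hn⟩ hi rfl, h4⟩⟩, fun h => by cases h⟩
  · exact ⟨p, q, hw, hp⟩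

end AuxRed1

/-- Let `M_1, …, M_n` be DFAs over a common alphabet `Σ`, each with nonempty
accepting set and all states reachable from the initial state, and let `G` be
the graph of the first reduction construction. Then `⋃ᵢ L(Mᵢ) = Σ*` iff the
shift space `⟨G⟩` is irreducible. -/
theorem stmt11 {n : ℕ} {Q : Fin n → Type} {A : Type}
    [Fintype A] [∀ i, Fintype (Q i)] (hn : 0 < n)
    (M : ∀ i, DFA' (Q i) A)
    (hacc : ∀ i, ((M i).accept).Nonempty)
    (hreach : ∀ i (q : Q i), ∃ w, (M i).evalFrom (M i).start w = q) :
    (⋃ i, (M i).lang) = Set.univ ↔ IrreducibleShift (Red1 M).shift := by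
  constructor
  · intro hU u hu v hv
    obtain ⟨p, q, hwu⟩ := (mem_lang_iff_walk hn hacc hreach u).mp hu
    obtain ⟨p', q', hwv⟩ := (mem_lang_iff_walk hn hacc hreach v).mp hv
    obtain ⟨r, r', hwv', hr⟩ := exists_walk_ne_pstar hn hU hwv
    obtain ⟨z₁, hz₁⟩ := reach_to_pre0 hn hacc hreach q
    obtain ⟨z₂, hz₂⟩ := reach_from_pre0 hn hreach r hr
    refine ⟨z₁ ++ z₂, (mem_lang_iff_walk hn hacc hreach _).mpr ⟨p, r', ?_⟩⟩
    exact walk_append hwu (walk_append (walk_append hz₁ hz₂) hwv')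
  · intro hIrr
    apply Set.eq_univ_of_forall
    intro w
    obtain ⟨qa, hqa⟩ := hacc ⟨0, hn⟩
    have hu : [Sym1.rm] ∈ lang ((Red1 M).shift) :=
      (mem_lang_iff_walk hn hacc hreach _).mpr
        ⟨.st ⟨0, hn⟩ qa, .pre ⟨0, hn⟩,
          walk_single (Red1Edge.exitAcc _ qa ⟨0, hn⟩ hqa rfl)⟩
    have hv : (Sym1.lm :: (w.map Sym1.letter ++ [Sym1.rm])) ∈ lang ((Red1 M).shift) :=
      (mem_lang_iff_walk hn hacc hreach _).mpr
        ⟨.pstar, .pre ⟨0, hn⟩, ⟨.sstar, Red1Edge.pstarEnter,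
          walk_append (walk_sstar_letters w)
            (walk_single (Red1Edge.sstarExit ⟨0, hn⟩ rfl))⟩⟩
    obtain ⟨z, hz⟩ := hIrr _ hu _ hv
    obtain ⟨P, R, hwalk⟩ := (mem_lang_iff_walk hn hacc hreach _).mp hz
    rw [List.singleton_append] at hwalk
    obtain ⟨P₁, he1, hw1⟩ := walk_cons_iff.mp hwalk
    obtain ⟨j, hj⟩ := inv_rm_target he1
    obtain ⟨P₂, hwz, hw2⟩ := walk_append_inv hw1
    have hP₂ : P₂ ≠ V1.pstar := by
      intro h
      subst h
      have h' := walk_to_pstar hwz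
      rw [hj] at h'
      cases h'
    obtain ⟨P₃, he3, hw3⟩ := walk_cons_iff.mp hw2
    rcases inv_lm he3 with ⟨h, _⟩ | ⟨i, hPi, hs⟩
    · exact absurd h hP₂
    · subst hs
      exact Set.mem_iUnion.mpr ⟨i, eval_accept w hw3⟩
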